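/- Let φ : [0,∞)² → [0,∞) be continuous, strictly increasing in each coordinate, with φ(0,0) = 0 and lim_{t→∞} φ(tz) = ∞ for nonzero z. If sequences aᵢ → a and bᵢ → b in [0,∞), then +̃_φ(aᵢ, bᵢ) → +̃_φ(a, b). In other words, the Orlicz addition map (a,b) ↦ +̃_φ(a,b) is continuous on [0,∞)². -/

import Mathlib

open Filter Set

/-- The Orlicz addition of two nonnegative numbers: the unique `λ > 0` with
`φ(a/λ, b/λ) = 1` when `a + b > 0`, and `0` when `a = b = 0`
(since `sInf ∅ = 0` in `ℝ`). -/
noncomputable def orliczAdd (φ : ℝ → ℝ → ℝ) (a b : ℝ) : ℝ :=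
  sInf {l : ℝ | 0 < l ∧ φ (a / l) (b / l) = 1}

section Aux

variable {φ : ℝ → ℝ → ℝ}

lemma orliczAdd_nonneg (φ : ℝ → ℝ → ℝ) (a b : ℝ) : 0 ≤ orliczAdd φ a b :=
  Real.sInf_nonneg (fun _ hx => hx.1.le)

lemma orliczAdd_zero (h0 : φ 0 0 = 0) : orliczAdd φ 0 0 = 0 := by
  have : {l : ℝ | 0 < l ∧ φ (0 / l) (0 / l) = 1} = ∅ := by
    ext l; simp [h0]
  rw [orliczAdd, this, Real.sInf_empty]

lemma tendsto_phi (hc : ContinuousOn (fun z : ℝ × ℝ => φ z.1 z.2) (Set.Ici 0 ×ˢ Set.Ici 0))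
    {ι : Type*} {F : Filter ι} {u v : ι → ℝ} {x y : ℝ}
    (hx : 0 ≤ x) (hy : 0 ≤ y)
    (hu : ∀ᶠ i in F, 0 ≤ u i) (hv : ∀ᶠ i in F, 0 ≤ v i)
    (hua : Tendsto u F (nhds x)) (hvb : Tendsto v F (nhds y)) :
    Tendsto (fun i => φ (u i) (v i)) F (nhds (φ x y)) := by
  have h := (hc (x, y) ⟨hx, hy⟩).tendsto
  have h2 : Tendsto (fun i => (u i, v i)) F (nhdsWithin (x, y) (Set.Ici 0 ×ˢ Set.Ici 0)) := by
    rw [tendsto_nhdsWithin_iff]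
    exact ⟨hua.prodMk_nhds hvb, (hu.and hv).mono fun i h => ⟨h.1, h.2⟩⟩
  exact h.comp h2

lemma phi_div_strictAnti
    (hm1 : ∀ y : ℝ, 0 ≤ y → StrictMonoOn (fun x => φ x y) (Set.Ici 0))
    (hm2 : ∀ x : ℝ, 0 ≤ x → StrictMonoOn (fun y => φ x y) (Set.Ici 0))
    {a b : ℝ} (ha : 0 ≤ a) (hb : 0 ≤ b) (hab : (a, b) ≠ (0, 0))
    {l₁ l₂ : ℝ} (h1 : 0 < l₁) (h2 : l₁ < l₂) :
    φ (a / l₂) (b / l₂) < φ (a / l₁) (b / l₁) := by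
  have h2' : 0 < l₂ := h1.trans h2
  have hbl : b / l₂ ≤ b / l₁ := by
    rw [div_le_div_iff₀ h2' h1]; nlinarith
  by_cases hA : a = 0
  · have hb' : 0 < b := by
      rcases hb.lt_or_eq with h | h
      · exact h
      · exact absurd (by rw [hA, ← h]) hab
    subst hA
    simp only [zero_div]
    exact hm2 0 le_rfl (mem_Ici.2 (div_nonneg hb h2'.le)) (mem_Ici.2 (div_nonneg hb h1.le))
      (by rw [div_lt_div_iff₀ h2' h1]; nlinarith)
  · have ha' : 0 < a := ha.lt_of_ne (Ne.symm hA)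
    calc φ (a / l₂) (b / l₂) < φ (a / l₁) (b / l₂) :=
          hm1 (b / l₂) (div_nonneg hb h2'.le) (mem_Ici.2 (div_nonneg ha h2'.le))
            (mem_Ici.2 (div_nonneg ha h1.le)) (by rw [div_lt_div_iff₀ h2' h1]; nlinarith)
      _ ≤ φ (a / l₁) (b / l₁) :=
          ((hm2 (a / l₁) (div_nonneg ha h1.le)).monotoneOn)
            (mem_Ici.2 (div_nonneg hb h2'.le)) (mem_Ici.2 (div_nonneg hb h1.le)) hbl

lemma orliczAdd_spec
    (hc : ContinuousOn (fun z : ℝ × ℝ => φ z.1 z.2) (Set.Ici 0 ×ˢ Set.Ici 0))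
    (hm1 : ∀ y : ℝ, 0 ≤ y → StrictMonoOn (fun x => φ x y) (Set.Ici 0))
    (hm2 : ∀ x : ℝ, 0 ≤ x → StrictMonoOn (fun y => φ x y) (Set.Ici 0))
    (h0 : φ 0 0 = 0)
    (hlim : ∀ z₁ z₂ : ℝ, 0 ≤ z₁ → 0 ≤ z₂ → (z₁, z₂) ≠ (0, 0) →
      Tendsto (fun t => φ (t * z₁) (t * z₂)) atTop atTop)
    {a b : ℝ} (ha : 0 ≤ a) (hb : 0 ≤ b) (hab : (a, b) ≠ (0, 0)) :
    0 < orliczAdd φ a b ∧ φ (a / orliczAdd φ a b) (b / orliczAdd φ a b) = 1 := by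
  obtain ⟨lam, hlpos, heq⟩ : ∃ l, 0 < l ∧ φ (a / l) (b / l) = 1 := by
    obtain ⟨T, hT1, hT0⟩ :=
      (((hlim a b ha hb hab).eventually (eventually_gt_atTop 1)).and
        (eventually_gt_atTop (0 : ℝ))).exists
    set l₀ := 1 / T with hl₀
    have hl₀pos : 0 < l₀ := by positivity
    have hg0 : 1 < φ (a / l₀) (b / l₀) := by
      have e : ∀ x : ℝ, x / l₀ = T * x := fun x => by
        rw [hl₀]; field_simp
      rw [e, e]; exact hT1
    have htail : Tendsto (fun l : ℝ => φ (a / l) (b / l)) atTop (nhds 0) := by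
      have := tendsto_phi (x := (0:ℝ)) (y := (0:ℝ)) hc le_rfl le_rfl
        ((eventually_gt_atTop (0:ℝ)).mono fun l hl => div_nonneg ha hl.le)
        ((eventually_gt_atTop (0:ℝ)).mono fun l hl => div_nonneg hb hl.le)
        (tendsto_const_nhds.div_atTop tendsto_id)
        (tendsto_const_nhds.div_atTop tendsto_id)
      rwa [h0] at this
    obtain ⟨L, hL1, hL0⟩ :=
      ((htail.eventually (eventually_lt_nhds (by norm_num : (0:ℝ) < 1))).and
        (eventually_ge_atTop l₀)).exists
    have hmap : ContinuousOn (fun l : ℝ => (a / l, b / l)) (Icc l₀ L) :=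
      (continuousOn_const.div continuousOn_id
          fun l hl => (lt_of_lt_of_le hl₀pos hl.1).ne').prodMk
        (continuousOn_const.div continuousOn_id
          fun l hl => (lt_of_lt_of_le hl₀pos hl.1).ne')
    have hgc : ContinuousOn (fun l : ℝ => φ (a / l) (b / l)) (Icc l₀ L) :=
      hc.comp hmap fun l hl =>
        ⟨mem_Ici.2 (div_nonneg ha (hl₀pos.trans_le hl.1).le),
          mem_Ici.2 (div_nonneg hb (hl₀pos.trans_le hl.1).le)⟩
    have hsub := intermediate_value_Icc' hL0 hgc
    obtain ⟨lam, hmem, hglam⟩ := hsub ⟨hL1.le, hg0.le⟩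
    exact ⟨lam, hl₀pos.trans_le hmem.1, hglam⟩
  have hset : {l : ℝ | 0 < l ∧ φ (a / l) (b / l) = 1} = {lam} := by
    ext l
    simp only [mem_setOf_eq, mem_singleton_iff]
    constructor
    · rintro ⟨hl', he'⟩
      by_contra hne
      rcases lt_or_gt_of_ne hne with h | h
      · have := phi_div_strictAnti hm1 hm2 ha hb hab hl' h
        rw [he', heq] at this; exact lt_irrefl _ this
      · have := phi_div_strictAnti hm1 hm2 ha hb hab hlpos h
        rw [he', heq] at this; exact lt_irrefl _ this
    · rintro rfl; exact ⟨hlpos, heq⟩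
  rw [orliczAdd, hset, csInf_singleton]
  exact ⟨hlpos, heq⟩

lemma lt_orliczAdd
    (hc : ContinuousOn (fun z : ℝ × ℝ => φ z.1 z.2) (Set.Ici 0 ×ˢ Set.Ici 0))
    (hm1 : ∀ y : ℝ, 0 ≤ y → StrictMonoOn (fun x => φ x y) (Set.Ici 0))
    (hm2 : ∀ x : ℝ, 0 ≤ x → StrictMonoOn (fun y => φ x y) (Set.Ici 0))
    (h0 : φ 0 0 = 0)
    (hlim : ∀ z₁ z₂ : ℝ, 0 ≤ z₁ → 0 ≤ z₂ → (z₁, z₂) ≠ (0, 0) →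
      Tendsto (fun t => φ (t * z₁) (t * z₂)) atTop atTop)
    {a b l : ℝ} (ha : 0 ≤ a) (hb : 0 ≤ b) (hl : 0 < l)
    (h : 1 < φ (a / l) (b / l)) : l < orliczAdd φ a b := by
  have hab : (a, b) ≠ (0, 0) := by
    rintro h'
    rw [Prod.mk.injEq] at h'
    obtain ⟨rfl, rfl⟩ := h'
    simp only [zero_div, h0] at h
    linarith
  obtain ⟨hpos, heq⟩ := orliczAdd_spec hc hm1 hm2 h0 hlim ha hb hab
  by_contra hle
  push_neg at hle
  rcases hle.lt_or_eq with hlt | heq2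
  · have := phi_div_strictAnti hm1 hm2 ha hb hab hpos hlt
    rw [heq] at this; linarith
  · rw [heq2] at heq; linarith

lemma orliczAdd_lt
    (hc : ContinuousOn (fun z : ℝ × ℝ => φ z.1 z.2) (Set.Ici 0 ×ˢ Set.Ici 0))
    (hm1 : ∀ y : ℝ, 0 ≤ y → StrictMonoOn (fun x => φ x y) (Set.Ici 0))
    (hm2 : ∀ x : ℝ, 0 ≤ x → StrictMonoOn (fun y => φ x y) (Set.Ici 0))
    (h0 : φ 0 0 = 0)
    (hlim : ∀ z₁ z₂ : ℝ, 0 ≤ z₁ → 0 ≤ z₂ → (z₁, z₂) ≠ (0, 0) →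
      Tendsto (fun t => φ (t * z₁) (t * z₂)) atTop atTop)
    {a b l : ℝ} (ha : 0 ≤ a) (hb : 0 ≤ b) (hl : 0 < l)
    (h : φ (a / l) (b / l) < 1) : orliczAdd φ a b < l := by
  by_cases hab : (a, b) = (0, 0)
  · rw [Prod.mk.injEq] at hab
    obtain ⟨rfl, rfl⟩ := hab
    rw [orliczAdd_zero h0]; exact hl
  · obtain ⟨hpos, heq⟩ := orliczAdd_spec hc hm1 hm2 h0 hlim ha hb hab
    by_contra hle
    push_neg at hle
    rcases hle.lt_or_eq with hlt | heq2
    · have := phi_div_strictAnti hm1 hm2 ha hb hab hl hlt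
      rw [heq] at this; linarith
    · rw [← heq2] at heq; linarith

lemma tendsto_orliczAdd
    (hc : ContinuousOn (fun z : ℝ × ℝ => φ z.1 z.2) (Set.Ici 0 ×ˢ Set.Ici 0))
    (hm1 : ∀ y : ℝ, 0 ≤ y → StrictMonoOn (fun x => φ x y) (Set.Ici 0))
    (hm2 : ∀ x : ℝ, 0 ≤ x → StrictMonoOn (fun y => φ x y) (Set.Ici 0))
    (h0 : φ 0 0 = 0)
    (hlim : ∀ z₁ z₂ : ℝ, 0 ≤ z₁ → 0 ≤ z₂ → (z₁, z₂) ≠ (0, 0) →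
      Tendsto (fun t => φ (t * z₁) (t * z₂)) atTop atTop)
    {a b : ℝ} (ha : 0 ≤ a) (hb : 0 ≤ b)
    {ι : Type*} {F : Filter ι} {u v : ι → ℝ}
    (hu : ∀ᶠ i in F, 0 ≤ u i) (hv : ∀ᶠ i in F, 0 ≤ v i)
    (hua : Tendsto u F (nhds a)) (hvb : Tendsto v F (nhds b)) :
    Tendsto (fun i => orliczAdd φ (u i) (v i)) F (nhds (orliczAdd φ a b)) := by
  set lam := orliczAdd φ a b with hlam
  rw [tendsto_order]
  constructor
  · intro c hc'
    rcases lt_or_ge c 0 with hc0 | hc0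
    · exact Eventually.of_forall fun i => hc0.trans_le (orliczAdd_nonneg φ _ _)
    · have hlampos : 0 < lam := hc0.trans_lt hc'
      have hab : (a, b) ≠ (0, 0) := by
        rintro h'
        rw [Prod.mk.injEq] at h'
        obtain ⟨rfl, rfl⟩ := h'
        rw [hlam, orliczAdd_zero h0] at hlampos
        exact lt_irrefl _ hlampos
      obtain ⟨hpos, heq⟩ := orliczAdd_spec hc hm1 hm2 h0 hlim ha hb hab
      set l := (c + lam) / 2 with hldef
      have hcl : c < l := by rw [hldef]; linarith
      have hllam : l < lam := by rw [hldef]; linarith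
      have hlpos : 0 < l := hc0.trans_lt hcl
      have hg : 1 < φ (a / l) (b / l) := by
        have := phi_div_strictAnti hm1 hm2 ha hb hab hlpos hllam
        rw [hlam] at this
        rw [heq] at this
        linarith
      have htends : Tendsto (fun i => φ (u i / l) (v i / l)) F (nhds (φ (a / l) (b / l))) :=
        tendsto_phi hc (div_nonneg ha hlpos.le) (div_nonneg hb hlpos.le)
          (hu.mono fun i h => div_nonneg h hlpos.le)
          (hv.mono fun i h => div_nonneg h hlpos.le)
          (hua.div_const l) (hvb.div_const l)
      filter_upwards [htends.eventually (eventually_gt_nhds hg), hu, hv] with i hi hui hvi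
      exact hcl.trans (lt_orliczAdd hc hm1 hm2 h0 hlim hui hvi hlpos hi)
  · intro c hc'
    have hlamnn : 0 ≤ lam := orliczAdd_nonneg φ a b
    set l := (lam + c) / 2 with hldef
    have hlaml : lam < l := by rw [hldef]; linarith
    have hlc : l < c := by rw [hldef]; linarith
    have hlpos : 0 < l := hlamnn.trans_lt hlaml
    have hg : φ (a / l) (b / l) < 1 := by
      by_cases hab : (a, b) = (0, 0)
      · rw [Prod.mk.injEq] at hab
        obtain ⟨rfl, rfl⟩ := hab
        simp only [zero_div, h0]
        norm_num
      · obtain ⟨hpos, heq⟩ := orliczAdd_spec hc hm1 hm2 h0 hlim ha hb hab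
        have := phi_div_strictAnti hm1 hm2 ha hb hab hpos (hlam ▸ hlaml)
        rw [heq] at this
        linarith
    have htends : Tendsto (fun i => φ (u i / l) (v i / l)) F (nhds (φ (a / l) (b / l))) :=
      tendsto_phi hc (div_nonneg ha hlpos.le) (div_nonneg hb hlpos.le)
        (hu.mono fun i h => div_nonneg h hlpos.le)
        (hv.mono fun i h => div_nonneg h hlpos.le)
        (hua.div_const l) (hvb.div_const l)
    filter_upwards [htends.eventually (eventually_lt_nhds hg), hu, hv] with i hi hui hvi
    exact (orliczAdd_lt hc hm1 hm2 h0 hlim hui hvi hlpos hi).trans hlc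

end Aux

theorem orlicz_add_continuous
    (φ : ℝ → ℝ → ℝ)
    (hc : ContinuousOn (fun z : ℝ × ℝ => φ z.1 z.2) (Set.Ici 0 ×ˢ Set.Ici 0))
    (hm1 : ∀ y : ℝ, 0 ≤ y → StrictMonoOn (fun x => φ x y) (Set.Ici 0))
    (hm2 : ∀ x : ℝ, 0 ≤ x → StrictMonoOn (fun y => φ x y) (Set.Ici 0))
    (h0 : φ 0 0 = 0)
    (hlim : ∀ z₁ z₂ : ℝ, 0 ≤ z₁ → 0 ≤ z₂ → (z₁, z₂) ≠ (0, 0) →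
      Tendsto (fun t => φ (t * z₁) (t * z₂)) atTop atTop)
    (a b : ℝ) (ha : 0 ≤ a) (hb : 0 ≤ b)
    (u v : ℕ → ℝ) (hu : ∀ i, 0 ≤ u i) (hv : ∀ i, 0 ≤ v i)
    (hua : Tendsto u atTop (nhds a)) (hvb : Tendsto v atTop (nhds b)) :
    Tendsto (fun i => orliczAdd φ (u i) (v i)) atTop (nhds (orliczAdd φ a b)) ∧
      ContinuousOn (fun z : ℝ × ℝ => orliczAdd φ z.1 z.2) (Set.Ici 0 ×ˢ Set.Ici 0) := by
  constructor
  · exact tendsto_orliczAdd hc hm1 hm2 h0 hlim ha hb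
      (Eventually.of_forall hu) (Eventually.of_forall hv) hua hvb
  · intro p hp
    exact tendsto_orliczAdd hc hm1 hm2 h0 hlim hp.1 hp.2
      (eventually_mem_nhdsWithin.mono fun z hz => hz.1)
      (eventually_mem_nhdsWithin.mono fun z hz => hz.2)
      ((continuous_fst.tendsto p).mono_left nhdsWithin_le_nhds)
      ((continuous_snd.tendsto p).mono_left nhdsWithin_le_nhds)
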